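/- If (a,b) is a reversed sum-product pair for base β with a < β < b, then the last (least significant) base-β digit b₀ of b satisfies b₀ < β - a. Consequently, no carry occurs in any column when computing the sum a + b in base β, and a+b has the same leading digit as b. -/

import Mathlib

/-- `(a, b)` is a reversed sum-product pair for base `β`: `a ≤ b` are positive
integers and the base-`β` digit sequence of `a * b` is the reverse of that of
`a + b` (in particular they have the same number of digits). -/
def IsRSP (β a b : ℕ) : Prop :=
  0 < a ∧ a ≤ b ∧ Nat.digits β (a * b) = (Nat.digits β (a + b)).reverse

lemma myOfDigits_replicate_zero (b k : ℕ) : Nat.ofDigits b (List.replicate k 0) = 0 := by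
  induction k with
  | zero => simp
  | succ k ih => simp [List.replicate_succ, Nat.ofDigits_cons, ih]

lemma myLt_getLast_succ_mul {β m d : ℕ} (hβ : 1 < β) (hm : m ≠ 0)
    (h : (Nat.digits β m).getLast? = some d) :
    m < (d + 1) * β ^ ((Nat.digits β m).length - 1) := by
  set L := Nat.digits β m with hL
  have hne : L ≠ [] := Nat.digits_ne_nil_iff_ne_zero.mpr hm
  have hlast : L.getLast hne = d := by
    rw [List.getLast?_eq_getLast hne] at h
    exact Option.some_injective _ h
  have hsplit : L.dropLast ++ [d] = L := by rw [← hlast]; exact List.dropLast_append_getLast hne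
  have hmeq : m = Nat.ofDigits β L := (Nat.ofDigits_digits β m).symm
  have hlen : L.dropLast.length = L.length - 1 := List.length_dropLast
  have hbound : Nat.ofDigits β L.dropLast < β ^ (L.length - 1) := by
    rw [← hlen]
    exact Nat.ofDigits_lt_base_pow_length hβ
      (fun x hx => Nat.digits_lt_base hβ (List.dropLast_subset L hx))
  have : Nat.ofDigits β L = Nat.ofDigits β L.dropLast + β ^ (L.length - 1) * d := by
    conv_lhs => rw [← hsplit]
    rw [Nat.ofDigits_append, Nat.ofDigits_singleton, hlen]
  rw [hmeq, this]
  have : (d + 1) * β ^ (L.length - 1) = β ^ (L.length - 1) + β ^ (L.length - 1) * d := by ring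
  omega

theorem stmt_10 (β a b : ℕ) (hβ : 2 ≤ β) (h : IsRSP β a b)
    (ha : a < β) (hb : β < b) :
    b % β < β - a ∧
    Nat.digits β (a + b) = (b % β + a) :: (Nat.digits β b).tail ∧
    (Nat.digits β (a + b)).getLast? = (Nat.digits β b).getLast? := by
  obtain ⟨ha0, hab, hrev⟩ := h
  have hβ1 : 1 < β := hβ
  have hb0 : b ≠ 0 := by omega
  have hab0 : a + b ≠ 0 := by omega
  have hmul0 : a * b ≠ 0 := Nat.mul_ne_zero (by omega) hb0
  set k := Nat.log β b with hk
  have hk1 : 1 ≤ k := Nat.log_pos hβ1 hb.le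
  have hblb : β ^ k ≤ b := Nat.pow_log_le_self β hb0
  have hbub : b < β ^ (k + 1) := Nat.lt_pow_succ_log_self hβ1 b
  have hβ2P : β * β ≤ β ^ (k + 1) := by
    calc β * β = β ^ 2 := (sq β).symm
    _ ≤ β ^ (k + 1) := Nat.pow_le_pow_right (by omega) (by omega)
  -- Step 1: a + b has the same number of digits as b
  have hlogk : Nat.log β (a + b) = k := by
    have hge : k ≤ Nat.log β (a + b) := Nat.log_mono_right (by omega)
    by_contra hne
    have hge' : k + 1 ≤ Nat.log β (a + b) := by omega
    have hP : β ^ (k + 1) ≤ a + b := (Nat.le_log_iff_pow_le hβ1 hab0).mp hge'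
    set P := β ^ (k + 1) with hPdef
    set r := a + b - P with hrdef
    have hrb : a + b = P + r := by omega
    have hra : r < a := by omega
    have hrβ : r < β := by omega
    rcases Nat.eq_zero_or_pos r with hr0 | hr0
    · -- a + b = P, digits are replicate (k+1) 0 ++ [1]
      have hdig : List.replicate (k + 1) 0 ++ [1] = Nat.digits β (a + b) := by
        have h1 : Nat.digits β 1 = [1] := Nat.digits_of_lt β 1 one_ne_zero hβ1
        have := Nat.digits_base_pow_mul (b := β) (k := k + 1) (m := 1) hβ1 one_pos
        rw [mul_one, h1] at this
        rw [← this]; congr 1; omega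
      have hmul : a * b = 1 := by
        have : a * b = Nat.ofDigits β ((Nat.digits β (a + b)).reverse) := by
          conv_lhs => rw [← Nat.ofDigits_digits β (a * b), hrev]
        rw [← hdig, List.reverse_append, List.reverse_replicate] at this
        simp only [List.reverse_singleton, List.singleton_append] at this
        rw [Nat.ofDigits_cons, myOfDigits_replicate_zero] at this
        simpa using this
      have : b ≤ a * b := Nat.le_mul_of_pos_left b (by omega)
      omega
    · -- a + b = P + r with 1 ≤ r < a
      have hdigr : Nat.digits β r = [r] := Nat.digits_of_lt β r (by omega) hrβ
      have hdig : [r] ++ List.replicate k 0 ++ [1] = Nat.digits β (a + b) := by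
        have h1 : Nat.digits β 1 = [1] := Nat.digits_of_lt β 1 one_ne_zero hβ1
        have := Nat.digits_append_zeroes_append_digits (b := β) (k := k) (m := 1) (n := r)
          hβ1 one_pos
        rw [h1, hdigr, mul_one] at this
        simp only [List.length_singleton] at this
        rw [this]; congr 1; rw [Nat.add_comm 1 k]; omega
      have hmul : a * b = 1 + P * r := by
        have h2 : a * b = Nat.ofDigits β ((Nat.digits β (a + b)).reverse) := by
          conv_lhs => rw [← Nat.ofDigits_digits β (a * b), hrev]
        rw [← hdig] at h2
        simp only [List.reverse_append, List.reverse_replicate, List.reverse_singleton,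
          List.reverse_cons, List.reverse_nil, List.nil_append,
          List.singleton_append, List.append_assoc] at h2
        rw [Nat.ofDigits_cons, Nat.ofDigits_append, myOfDigits_replicate_zero,
          Nat.ofDigits_singleton, List.length_replicate] at h2
        rw [h2, hPdef]; ring
      -- contradiction via integer arithmetic
      have e1 : (a : ℤ) * b = 1 + P * r := by exact_mod_cast hmul
      have e2 : (a : ℤ) + b = P + r := by exact_mod_cast hrb
      have key : ((a : ℤ) - r) * ((P : ℤ) - a) = 1 := by linear_combination e1 - (a : ℤ) * e2
      have h1r : (1 : ℤ) ≤ (a : ℤ) - (r : ℤ) := by omega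
      have h2P : (2 : ℤ) ≤ (P : ℤ) - (a : ℤ) := by
        have h' : a + 2 ≤ P := by nlinarith [hβ2P, ha, hβ]
        omega
      nlinarith [key, h1r, h2P]
  have hlen_ab : (Nat.digits β (a + b)).length = k + 1 := by
    rw [Nat.digits_len β _ hβ1 hab0, hlogk]
  have hlen_mul : (Nat.digits β (a * b)).length = k + 1 := by
    rw [hrev, List.length_reverse, hlen_ab]
  -- Step 2: the main claim
  have hbm : b % β < β := Nat.mod_lt _ (by omega)
  have hmain : b % β < β - a := by
    by_contra hc
    push_neg at hc
    have hd : (a + b) % β = a + b % β - β := by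
      have h1 : (a + b) % β = (a + b % β) % β := by
        conv_lhs => rw [Nat.add_mod, Nat.mod_eq_of_lt ha]
      rw [h1, Nat.mod_eq_sub_mod (by omega), Nat.mod_eq_of_lt (by omega)]
    set d := a + b % β - β with hddef
    have hd_lt : d + 1 ≤ a := by omega
    have hhead : (Nat.digits β (a + b)).head? = some ((a + b) % β) := by
      rw [Nat.digits_def' hβ1 (show 0 < a + b by omega)]; rfl
    have hlast : (Nat.digits β (a * b)).getLast? = some d := by
      rw [hrev, List.getLast?_reverse, hhead, hd]
    have hub := myLt_getLast_succ_mul hβ1 hmul0 hlast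
    rw [hlen_mul] at hub
    simp only [Nat.add_sub_cancel] at hub
    have hlb : a * β ^ k ≤ a * b := Nat.mul_le_mul_left a hblb
    have hstep : (d + 1) * β ^ k ≤ a * β ^ k := Nat.mul_le_mul_right _ hd_lt
    omega
  -- Step 3: conclusions
  have hna : a + b % β < β := by omega
  have hmod : (a + b) % β = b % β + a := by
    conv_lhs => rw [Nat.add_mod, Nat.mod_eq_of_lt ha]
    rw [Nat.mod_eq_of_lt hna]; omega
  have hdiv : (a + b) / β = b / β := by
    have hb' : β * (b / β) + b % β = b := Nat.div_add_mod b β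
    have heq : a + b = a + b % β + β * (b / β) := by omega
    rw [heq, Nat.add_mul_div_left _ _ (show 0 < β by omega),
      Nat.div_eq_of_lt hna, Nat.zero_add]
  have hdig_ab : Nat.digits β (a + b) = (b % β + a) :: Nat.digits β (b / β) := by
    rw [Nat.digits_def' hβ1 (show 0 < a + b by omega), hmod, hdiv]
  have hdig_b : Nat.digits β b = b % β :: Nat.digits β (b / β) :=
    Nat.digits_def' hβ1 (by omega)
  refine ⟨hmain, by rw [hdig_ab, hdig_b, List.tail_cons], ?_⟩
  have hq : b / β ≠ 0 := by
    have : β ≤ b := hb.le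
    have := Nat.div_pos this (by omega)
    omega
  obtain ⟨x, t, hxt⟩ := List.exists_cons_of_ne_nil (Nat.digits_ne_nil_iff_ne_zero.mpr hq)
  rw [hdig_ab, hdig_b, hxt, List.getLast?_cons_cons, List.getLast?_cons_cons]
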